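/- Let X be a quasi-compact quasi-separated scheme and let W_1, …, W_m be finitely many locally closed constructible subsets stratifying X (i.e. X is their disjoint union). Then there is a finite filtration ∅ = X_0 ⊆ X_1 ⊆ ⋯ ⊆ X_n = X by quasi-compact open subsets such that each difference X_i \ X_{i-1} is contained in some W_j. -/
import Mathlib


open AlgebraicGeometry

/-- A subset of (the underlying space of) a scheme is constructible if it is a finite
union of differences of quasi-compact open subsets. -/
def SchemeIsConstructible {X : Scheme} (s : Set X) : Prop :=
  ∃ (n : ℕ) (U V : Fin n → Set X),
    (∀ i, IsOpen (U i) ∧ IsCompact (U i)) ∧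
    (∀ i, IsOpen (V i) ∧ IsCompact (V i)) ∧
    s = ⋃ i, U i \ V i

/-- Finite intersections of quasi-compact open sets in a compact quasi-separated space
are quasi-compact open. -/
lemma aux_biInter_qcopen {X : Type*} [TopologicalSpace X] [CompactSpace X]
    [QuasiSeparatedSpace X] {ι : Type*} (G : ι → Set X)
    (hG : ∀ i, IsOpen (G i) ∧ IsCompact (G i)) (A : Finset ι) :
    IsOpen (⋂ i ∈ A, G i) ∧ IsCompact (⋂ i ∈ A, G i) := by
  classical
  induction A using Finset.induction with
  | empty => exact ⟨by simp, by simpa using isCompact_univ⟩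
  | @insert a A ha ih =>
    rw [Finset.set_biInter_insert]
    exact ⟨(hG a).1.inter ih.1,
      QuasiSeparatedSpace.inter_isCompact _ _ (hG a).1 (hG a).2 ih.1 ih.2⟩

/-- Key combinatorial lemma: given finitely many quasi-compact open subsets of a compact
quasi-separated space, there is a filtration by quasi-compact opens such that any two
points in the same successive difference have the same "type", i.e. belong to exactly
the same members of the family. -/
lemma aux_filtration {X : Type*} [TopologicalSpace X] [CompactSpace X]
    [QuasiSeparatedSpace X] {ι : Type*} [Fintype ι] (G : ι → Set X)
    (hG : ∀ i, IsOpen (G i) ∧ IsCompact (G i)) :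
    ∃ (n : ℕ) (F : ℕ → Set X), F 0 = ∅ ∧ F n = Set.univ ∧
      (∀ i, F i ⊆ F (i + 1)) ∧
      (∀ i, IsOpen (F i) ∧ IsCompact (F i)) ∧
      (∀ i, ∀ x ∈ F (i + 1) \ F i, ∀ y ∈ F (i + 1) \ F i, ∀ k, x ∈ G k ↔ y ∈ G k) := by
  classical
  set K := Fintype.card ι with hK
  set N := Fintype.card (Finset ι) with hN
  set φ : X → Finset ι := fun x => Finset.univ.filter (fun i => x ∈ G i) with hφ
  set enc : Finset ι → ℕ := fun A => ((Fintype.equivFin (Finset ι)) A : ℕ) with henc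
  have hencN : ∀ A, enc A < N := fun A => ((Fintype.equivFin (Finset ι)) A).isLt
  set key : Finset ι → ℕ := fun A => (K - A.card) * N + enc A with hkey
  have key_inj : Function.Injective key := by
    intro A B hAB
    have hA : key A % N = enc A := by
      show ((K - A.card) * N + enc A) % N = enc A
      rw [Nat.mul_comm, Nat.mul_add_mod, Nat.mod_eq_of_lt (hencN A)]
    have hB : key B % N = enc B := by
      show ((K - B.card) * N + enc B) % N = enc B
      rw [Nat.mul_comm, Nat.mul_add_mod, Nat.mod_eq_of_lt (hencN B)]
    have : enc A = enc B := by rw [← hA, ← hB, hAB]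
    exact (Fintype.equivFin (Finset ι)).injective (Fin.ext this)
  have key_lt : ∀ {A B : Finset ι}, A ⊂ B → key B < key A := by
    intro A B hAB
    have hcard : A.card < B.card := Finset.card_lt_card hAB
    have hBK : B.card ≤ K := Finset.card_le_univ B
    have h1 : K - B.card + 1 ≤ K - A.card := by omega
    calc key B = (K - B.card) * N + enc B := rfl
      _ < (K - B.card) * N + N := by have := hencN B; omega
      _ = (K - B.card + 1) * N := by ring
      _ ≤ (K - A.card) * N := Nat.mul_le_mul_right N h1
      _ ≤ key A := Nat.le_add_right _ _
  set rank : Finset ι → ℕ := fun A => (Finset.univ.filter (fun B => key B < key A)).card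
    with hrank
  have rank_lt : ∀ {A B : Finset ι}, key B < key A → rank B < rank A := by
    intro A B h
    apply Finset.card_lt_card
    constructor
    · intro C hC
      simp only [Finset.mem_filter, Finset.mem_univ, true_and] at hC ⊢
      exact hC.trans h
    · intro hsub
      have : B ∈ Finset.univ.filter (fun C => key C < key B) :=
        hsub (by simp [h])
      simp at this
  have rank_eq : ∀ {A B : Finset ι}, rank A = rank B → A = B := by
    intro A B h
    rcases lt_trichotomy (key A) (key B) with hlt | heq | hgt
    · exact absurd (rank_lt hlt) (by omega)
    · exact key_inj heq
    · exact absurd (rank_lt hgt) (by omega)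
  have rank_lt_N : ∀ A, rank A < N := by
    intro A
    have : Finset.univ.filter (fun B => key B < key A) ⊂ Finset.univ :=
      Finset.filter_ssubset.mpr ⟨A, Finset.mem_univ A, lt_irrefl _⟩
    have := Finset.card_lt_card this
    rwa [Finset.card_univ] at this
  have mem_phi : ∀ (x : X) (i : ι), i ∈ φ x ↔ x ∈ G i := by
    intro x i; simp [hφ]
  refine ⟨N, fun t => {x | rank (φ x) < t}, ?_, ?_, ?_, ?_, ?_⟩
  · simp
  · ext x; simp [rank_lt_N]
  · intro i x hx; simp only [Set.mem_setOf_eq] at hx ⊢; omega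
  · -- open and compact
    intro t
    constructor
    · rw [isOpen_iff_forall_mem_open]
      intro x hx
      simp only [Set.mem_setOf_eq] at hx
      refine ⟨⋂ i ∈ φ x, G i, ?_, (aux_biInter_qcopen G hG (φ x)).1, ?_⟩
      · intro y hy
        simp only [Set.mem_iInter] at hy
        have hsub : φ x ⊆ φ y := by
          intro i hi
          exact (mem_phi y i).mpr (hy i hi)
        rcases lt_or_eq_of_le (Finset.le_iff_subset.mpr hsub) with hlt | heq
        · exact Set.mem_setOf_eq ▸ lt_trans (rank_lt (key_lt hlt)) hx
        · simpa only [Set.mem_setOf_eq, ← heq] using hx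
      · simp only [Set.mem_iInter]
        intro i hi
        exact (mem_phi x i).mp hi
    · have heq : {x | rank (φ x) < t} =
          ⋃ A ∈ Finset.univ.filter (fun A : Finset ι => rank A < t), {x | φ x = A} := by
        ext x
        simp only [Set.mem_setOf_eq, Set.mem_iUnion, Finset.mem_filter, Finset.mem_univ,
          true_and]
        exact ⟨fun h => ⟨φ x, h, rfl⟩, fun ⟨A, hA, hxA⟩ => hxA ▸ hA⟩
      show IsCompact {x | rank (φ x) < t}
      rw [heq]
      apply Finset.isCompact_biUnion
      intro A _
      have hatom : {x | φ x = A} = (⋂ i ∈ A, G i) ∩ (⋂ i ∈ Aᶜ, (G i)ᶜ) := by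
        ext x
        simp only [Set.mem_setOf_eq, Set.mem_inter_iff, Set.mem_iInter, Set.mem_compl_iff,
          Finset.mem_compl]
        constructor
        · rintro rfl
          exact ⟨fun i hi => (mem_phi x i).mp hi, fun i hi hx => hi ((mem_phi x i).mpr hx)⟩
        · rintro ⟨h1, h2⟩
          ext i
          rw [mem_phi]
          exact ⟨fun hx => by_contra fun hi => h2 i hi hx, fun hi => h1 i hi⟩
      rw [hatom]
      exact (aux_biInter_qcopen G hG A).2.inter_right
        (isClosed_biInter fun i _ => (hG i).1.isClosed_compl)
  · -- differences
    intro i x hx y hy k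
    simp only [Set.mem_diff, Set.mem_setOf_eq] at hx hy
    have hxy : φ x = φ y := rank_eq (by omega)
    rw [← mem_phi, ← mem_phi, hxy]

/-- On a quasi-compact quasi-separated scheme, a finite stratification by locally closed
constructible subsets is refined by a finite filtration by quasi-compact open subsets:
each difference of consecutive opens is contained in one stratum. -/
theorem exists_filtration_of_stratification {X : Scheme} [CompactSpace X]
    [QuasiSeparatedSpace X] (m : ℕ) (W : Fin m → Set X)
    (hlc : ∀ j, IsLocallyClosed (W j)) (hcon : ∀ j, SchemeIsConstructible (W j))
    (hdisj : Pairwise (Function.onFun Disjoint W)) (hcover : ⋃ j, W j = Set.univ) :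
    ∃ (n : ℕ) (F : ℕ → Set X), F 0 = ∅ ∧ F n = Set.univ ∧
      (∀ i, F i ⊆ F (i + 1)) ∧
      (∀ i, IsOpen (F i) ∧ IsCompact (F i)) ∧
      (∀ i < n, ∃ j, F (i + 1) \ F i ⊆ W j) := by
  classical
  by_cases hX : IsEmpty X
  · refine ⟨0, fun _ => ∅, rfl, (Set.univ_eq_empty_iff.mpr hX).symm,
      fun i => subset_rfl, fun i => ⟨isOpen_empty, isCompact_empty⟩, ?_⟩
    intro i hi; exact absurd hi (Nat.not_lt_zero i)
  · have hne : Nonempty X := not_isEmpty_iff.mp hX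
    obtain ⟨x₀⟩ := hne
    obtain ⟨j₀, _⟩ := Set.mem_iUnion.mp (hcover ▸ Set.mem_univ x₀)
    choose nn U V hU hV hW using hcon
    set ι := (j : Fin m) × (Fin (nn j) ⊕ Fin (nn j)) with hι
    set G : ι → Set X := fun p => Sum.elim (fun i => U p.1 i) (fun i => V p.1 i) p.2 with hGdef
    have hG : ∀ p, IsOpen (G p) ∧ IsCompact (G p) := by
      rintro ⟨j, i | i⟩
      · exact hU j i
      · exact hV j i
    obtain ⟨n, F, h0, hn, hmono, hoc, hdiff⟩ := aux_filtration G hG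
    refine ⟨n, F, h0, hn, hmono, hoc, ?_⟩
    intro i hi
    by_cases hE : (F (i + 1) \ F i).Nonempty
    · obtain ⟨x, hx⟩ := hE
      obtain ⟨j, hj⟩ := Set.mem_iUnion.mp (hcover ▸ Set.mem_univ x)
      refine ⟨j, fun y hy => ?_⟩
      have hkey := hdiff i x hx y hy
      rw [hW j] at hj ⊢
      obtain ⟨i', hi'⟩ := Set.mem_iUnion.mp hj
      refine Set.mem_iUnion.mpr ⟨i', ?_, ?_⟩
      · exact (hkey ⟨j, Sum.inl i'⟩).mp hi'.1
      · intro hyV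
        exact hi'.2 ((hkey ⟨j, Sum.inr i'⟩).mpr hyV)
    · exact ⟨j₀, fun y hy => absurd ⟨y, hy⟩ hE⟩
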